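/- Heller's representability theorem: Let K be a triangulated category with products. A homological functor F : K → Ab that preserves products is representable if and only if it admits a solution object, i.e., there exists S ∈ K and a natural epimorphism K(S,-) → F. -/

import Mathlib

open CategoryTheory CategoryTheory.Limits CategoryTheory.Pretriangulated
universe v u



section WeakKernel

variable {K : Type u} [Category.{v} K] [Preadditive K] [HasZeroObject K]
  [HasShift K ℤ] [∀ n : ℤ, (shiftFunctor K n).Additive] [Pretriangulated K]

/-- Weak kernels in a pretriangulated category, with homological lifting and a mono criterion. -/
lemma heller_weakKernel {A B : K} (f : A ⟶ B) :
    ∃ (V : K) (v : V ⟶ A), v ≫ f = 0 ∧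
      (∀ ⦃W : K⦄ (c : W ⟶ A), c ≫ f = 0 → ∃ c' : W ⟶ V, c' ≫ v = c) ∧
      (∀ (F : K ⥤ AddCommGrpCat.{v}) (_ : F.IsHomological) (x : F.obj A),
          F.map f x = 0 → ∃ ξ : F.obj V, F.map v ξ = x) ∧
      (Epi f → Mono v) := by
  obtain ⟨Q, g, h, hT⟩ := Pretriangulated.distinguished_cocone_triangle f
  have hT' := inv_rot_of_distTriang _ hT
  refine ⟨_, (Triangle.mk f g h).invRotate.mor₁,
    comp_distTriang_mor_zero₁₂ _ hT', ?_, ?_, ?_⟩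
  · intro W c hc
    obtain ⟨c', hc'⟩ := Triangle.coyoneda_exact₂ _ hT' c hc
    exact ⟨c', hc'.symm⟩
  · intro F hF x hx
    have he := F.map_distinguished_exact _ hT'
    rw [ShortComplex.ab_exact_iff] at he
    exact he x hx
  · intro hf
    have h3 : (Triangle.mk f g h).invRotate.mor₃ = 0 :=
      Triangle.mor₃_eq_zero_of_epi₂ _ hT' hf
    exact (Triangle.mor₃_eq_zero_iff_mono₁ _ hT').1 h3

end WeakKernel

variable {K : Type u} [Category.{v} K] [Preadditive K] [HasZeroObject K]
  [HasShift K ℤ] [∀ n : ℤ, (shiftFunctor K n).Additive] [Pretriangulated K]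
  [HasProducts.{v} K]

/-- Idempotents split in a pretriangulated category with countable products
(Bökstedt–Neeman). -/
lemma heller_splitIdempotent {X : K} (e : X ⟶ X) (he : e ≫ e = e) :
    ∃ (Y : K) (i : X ⟶ Y) (ρ : Y ⟶ X), ρ ≫ i = 𝟙 Y ∧ i ≫ ρ = e := by
  let P : K := ∏ᶜ (fun _ : ULift.{v} ℕ => X)
  let π : ULift.{v} ℕ → (P ⟶ X) := fun n => Pi.π _ n
  let φ : P ⟶ P := Pi.lift (fun n => π n - π ⟨n.down + 1⟩ ≫ e)
  let k : P ⟶ P := Pi.lift (fun n =>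
    π n ≫ (𝟙 X - e) - (∑ j ∈ Finset.range n.down, π ⟨j⟩) ≫ e)
  have hk : k ≫ φ = 𝟙 P := by
    apply Pi.hom_ext
    intro n
    have hπ : ∀ m : ULift.{v} ℕ, k ≫ π m =
        π m ≫ (𝟙 X - e) - (∑ j ∈ Finset.range m.down, π ⟨j⟩) ≫ e := by
      intro m; simp [k, π]
    rw [Category.assoc, Category.id_comp]
    show k ≫ (φ ≫ Pi.π _ n) = π n
    rw [show φ ≫ Pi.π _ n = π n - π ⟨n.down + 1⟩ ≫ e by simp [φ, π]]
    have c1 : (𝟙 X - e) ≫ e = 0 := by simp [Preadditive.sub_comp, he]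
    rw [Preadditive.comp_sub, ← Category.assoc, hπ n, hπ ⟨n.down + 1⟩,
      Preadditive.sub_comp, Category.assoc, c1, comp_zero, Category.assoc, he,
      Finset.sum_range_succ]
    simp only [Preadditive.add_comp, Preadditive.comp_sub, Category.comp_id, zero_sub,
      sub_neg_eq_add]
    abel
  have hepi : Epi φ := by
    have : IsSplitEpi φ := ⟨⟨⟨k, hk⟩⟩⟩
    infer_instance
  obtain ⟨V, v, hv0, hfact, -, hmono⟩ := heller_weakKernel (K := K) φ
  have hmv : Mono v := hmono hepi
  -- the canonical map X → P with all components e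
  let c : X ⟶ P := Pi.lift (fun _ => e)
  have hc : c ≫ φ = 0 := by
    apply Pi.hom_ext
    intro n
    have : φ ≫ Pi.π _ n = π n - π ⟨n.down + 1⟩ ≫ e := by simp [φ, π]
    rw [Category.assoc, this, Preadditive.comp_sub, zero_comp, ← Category.assoc,
      show c ≫ π n = e by simp [c, π], show c ≫ π ⟨n.down+1⟩ = e by simp [c, π], he, sub_self]
  obtain ⟨i, hi⟩ := hfact c hc
  -- components of v are all equal and fixed by e
  have hvφ : ∀ m : ULift.{v} ℕ, v ≫ π m = (v ≫ π ⟨m.down + 1⟩) ≫ e := by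
    intro m
    have h0 : v ≫ (φ ≫ Pi.π _ m) = 0 := by rw [← Category.assoc, hv0, zero_comp]
    rw [show φ ≫ Pi.π _ m = π m - π ⟨m.down + 1⟩ ≫ e by simp [φ, π],
      Preadditive.comp_sub, sub_eq_zero] at h0
    rw [h0]
    exact (Category.assoc _ _ _).symm
  have hve : ∀ m : ULift.{v} ℕ, (v ≫ π m) ≫ e = v ≫ π m := by
    intro m
    conv_lhs => rw [hvφ m, Category.assoc, he]
    exact (hvφ m).symm
  have hvconst : ∀ m : ℕ, v ≫ π ⟨m⟩ = v ≫ π ⟨0⟩ := by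
    intro m
    induction m with
    | zero => rfl
    | succ p ih => rw [← ih, hvφ ⟨p⟩, hve ⟨p+1⟩]
  refine ⟨V, i, v ≫ π ⟨0⟩, ?_, ?_⟩
  · rw [← cancel_mono v, Category.assoc, Category.assoc, hi, Category.id_comp]
    apply Pi.hom_ext
    intro n
    simp only [Category.assoc]
    rw [show c ≫ Pi.π (fun _ : ULift.{v} ℕ => X) n = e by simp [c],
      ← Category.assoc, hve ⟨0⟩]
    obtain ⟨n⟩ := n
    exact (hvconst n).symm
  · rw [← Category.assoc, hi]
    simp [c, π]


section Elem

/-- An element of an abelian group as a morphism from `ULift ℤ`. -/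
noncomputable def elHom {A : AddCommGrpCat.{v}} (x : A) : AddCommGrpCat.of (ULift.{v} ℤ) ⟶ A :=
  AddCommGrpCat.ofHom (uliftZMultiplesHom A x)

lemma elHom_spec {A : AddCommGrpCat.{v}} (x : A) : elHom x (ULift.up (1 : ℤ)) = x := by
  simp [elHom]
  exact one_smul ℤ x

lemma elHom_injective {A : AddCommGrpCat.{v}} {x y : A} (h : elHom x = elHom y) : x = y := by
  have := congrArg (fun φ => φ (ULift.up (1 : ℤ))) h
  exact (elHom_spec x).symm.trans (this.trans (elHom_spec y))

lemma elHom_comp {A B : AddCommGrpCat.{v}} (x : A) (φ : A ⟶ B) :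
    elHom x ≫ φ = elHom (φ x) := by
  apply AddCommGrpCat.hom_ext
  apply (uliftZMultiplesHom B).symm.injective
  simp only [uliftZMultiplesHom_symm_apply]
  show (elHom x ≫ φ) (ULift.up 1) = (elHom (φ x)) (ULift.up 1)
  rw [elHom_spec, comp_apply, elHom_spec]

lemma addCommGrp_pi_ext {J : Type v} (g : J → AddCommGrpCat.{v})
    (u : (∏ᶜ g : AddCommGrpCat.{v})) (hu : ∀ j, Pi.π g j u = 0) : u = 0 := by
  apply elHom_injective
  apply Pi.hom_ext
  intro j
  rw [elHom_comp, elHom_comp, hu j, map_zero]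

lemma addCommGrp_sub_apply' {P Q : AddCommGrpCat.{v}} (f g : P ⟶ Q) (x : P) :
    (f - g) x = f x - g x := rfl

end Elem

section ProdInj

variable {K : Type u} [Category.{v} K] [HasProducts.{v} K]

lemma heller_product_inj (F : K ⥤ AddCommGrpCat.{v})
    [∀ J : Type v, PreservesLimitsOfShape (Discrete J) F]
    {J : Type v} (f : J → K) (z : F.obj (∏ᶜ f))
    (hz : ∀ j, F.map (Pi.π f j) z = 0) : z = 0 := by
  have hmono : Function.Injective (piComparison F f) := by
    rw [← AddCommGrpCat.mono_iff_injective]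
    infer_instance
  apply hmono
  rw [map_zero]
  apply addCommGrp_pi_ext
  intro j
  rw [← comp_apply, piComparison_comp_π, hz j]

end ProdInj

/-- **Heller's representability theorem.** Let `K` be a triangulated category
with products. A homological product-preserving functor `F : K ⥤ Ab` is representable
(naturally isomorphic to `K(S,-)` for some `S : K`) if and only if it admits a solution
object, i.e. there are `S : K` and a natural epimorphism `K(S,-) ⟶ F`. -/
theorem statement5 (K : Type u) [Category.{v} K] [Preadditive K] [HasZeroObject K]
    [HasShift K ℤ] [∀ n : ℤ, (shiftFunctor K n).Additive] [Pretriangulated K]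
    [HasProducts.{v} K]
    (F : K ⥤ AddCommGrpCat.{v}) [F.IsHomological]
    [∀ J : Type v, PreservesLimitsOfShape (Discrete J) F] :
    (∃ S : K, Nonempty (F ≅ preadditiveCoyoneda.obj (Opposite.op S))) ↔
      (∃ (S : K) (η : preadditiveCoyoneda.obj (Opposite.op S) ⟶ F), Epi η) := by
  constructor
  · rintro ⟨S, ⟨e⟩⟩
    exact ⟨S, e.inv, inferInstance⟩
  · rintro ⟨S₀, η, hη⟩
    -- the universal element of the solution object
    set σ₀ : F.obj S₀ := η.app S₀ (𝟙 S₀) with hσ₀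
    -- weak initiality: every element of `F` is hit from `σ₀`
    have hsurj : ∀ (X : K) (x : F.obj X), ∃ g : S₀ ⟶ X, F.map g σ₀ = x := by
      intro X x
      have happ : Epi (η.app X) := ((NatTrans.epi_iff_epi_app η).1 hη) X
      obtain ⟨g, hg⟩ := (AddCommGrpCat.epi_iff_surjective _).1 happ x
      refine ⟨g, ?_⟩
      have hnat : η.app X ((preadditiveCoyoneda.obj (Opposite.op S₀)).map g (𝟙 S₀)) =
          F.map g σ₀ := CategoryTheory.congr_fun (η.naturality g) (𝟙 S₀)
      rw [← hg, ← hnat]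
      congr 1
      show 𝟙 S₀ ≫ g = g
      exact Category.id_comp _
    -- kill all endomorphisms fixing `σ₀`
    let E := {e : S₀ ⟶ S₀ // F.map e σ₀ = σ₀}
    let a : S₀ ⟶ ∏ᶜ (fun _ : E => S₀) := Pi.lift (fun e => e.1)
    let b : S₀ ⟶ ∏ᶜ (fun _ : E => S₀) := Pi.lift (fun _ => 𝟙 S₀)
    have hd0 : F.map (a - b) σ₀ = 0 := by
      apply heller_product_inj F
      intro j
      rw [← comp_apply, ← F.map_comp,
        show (a - b) ≫ Pi.π _ j = j.1 - 𝟙 S₀ by simp [a, b], F.map_sub,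
        addCommGrp_sub_apply', j.2, F.map_id]
      show σ₀ - σ₀ = 0
      rw [sub_self]
    obtain ⟨W, w, hw0, -, hlift, -⟩ := heller_weakKernel (a - b)
    obtain ⟨ξ, hξ⟩ := hlift F inferInstance σ₀ hd0
    have hfix : ∀ (e : S₀ ⟶ S₀), F.map e σ₀ = σ₀ → w ≫ e = w := by
      intro e he
      have h0 : w ≫ ((a - b) ≫ Pi.π _ (⟨e, he⟩ : E)) = 0 := by
        rw [← Category.assoc, hw0, zero_comp]
      rw [show (a - b) ≫ Pi.π _ (⟨e, he⟩ : E) = e - 𝟙 S₀ by simp [a, b],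
        Preadditive.comp_sub, Category.comp_id, sub_eq_zero] at h0
      exact h0
    obtain ⟨t, ht⟩ := hsurj W ξ
    -- `w ≫ t` is idempotent; split it
    have hp : (w ≫ t) ≫ (w ≫ t) = w ≫ t := by
      have h1 : w ≫ (t ≫ w) = w := by
        apply hfix
        rw [F.map_comp, comp_apply, ht, hξ]
      calc (w ≫ t) ≫ (w ≫ t) = (w ≫ (t ≫ w)) ≫ t := by simp only [Category.assoc]
        _ = w ≫ t := by rw [h1]
    obtain ⟨I, i, ρ, hρi, hiρ⟩ := heller_splitIdempotent (w ≫ t) hp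
    set θ : F.obj I := F.map i ξ with hθ
    have hρθ : F.map ρ θ = ξ := by
      rw [hθ, ← comp_apply, ← F.map_comp, hiρ, F.map_comp, comp_apply, hξ, ht]
    have hwρθ : F.map (ρ ≫ w) θ = σ₀ := by
      rw [F.map_comp, comp_apply, hρθ, hξ]
    -- the representing natural transformation
    let μ : preadditiveCoyoneda.obj (Opposite.op I) ⟶ F :=
      { app := fun X => AddCommGrpCat.ofHom
          { toFun := fun g => F.map g θ
            map_zero' := by
              show F.map (0 : I ⟶ X) θ = 0
              rw [F.map_zero]
              simp
            map_add' := fun (g g' : I ⟶ X) => by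
              show F.map (g + g') θ = F.map g θ + F.map g' θ
              rw [F.map_add, AddCommGrpCat.hom_add_apply] }
        naturality := fun X Y h => by
          ext (g : I ⟶ X)
          show F.map (g ≫ h) θ = F.map h (F.map g θ)
          rw [F.map_comp, comp_apply] }
    have hbij : ∀ X : K, Function.Bijective (μ.app X) := by
      intro X
      constructor
      · -- injectivity
        intro (g : I ⟶ X) (g' : I ⟶ X) hgg'
        suffices h : ∀ q : I ⟶ X, F.map q θ = 0 → q = 0 by
          have := h ((g : I ⟶ X) - g') (by
            rw [F.map_sub, addCommGrp_sub_apply',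
              show (F.map g) θ = μ.app X g from rfl, show (F.map g') θ = μ.app X g' from rfl,
              hgg', sub_self])
          show (g : I ⟶ X) = g'
          rw [← sub_eq_zero]
          exact this
        intro q hq
        obtain ⟨V, vq, hvq0, -, hliftq, -⟩ := heller_weakKernel q
        obtain ⟨ζ, hζ⟩ := hliftq F inferInstance θ hq
        obtain ⟨s, hs⟩ := hsurj V ζ
        have key : w ≫ (s ≫ vq ≫ ρ ≫ w) = w := by
          apply hfix
          rw [F.map_comp, F.map_comp, F.map_comp, comp_apply, comp_apply, comp_apply,
            hs, hζ, hρθ, hξ]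
        have hj : ρ ≫ w ≫ s ≫ vq = 𝟙 I := by
          have h2 : ρ ≫ (w ≫ (s ≫ vq ≫ ρ ≫ w)) ≫ t ≫ i = ρ ≫ w ≫ t ≫ i := by rw [key]
          have h3 : ρ ≫ w ≫ t ≫ i = 𝟙 I := by
            calc ρ ≫ w ≫ t ≫ i = ρ ≫ (w ≫ t) ≫ i := by simp only [Category.assoc]
              _ = ρ ≫ (i ≫ ρ) ≫ i := by rw [hiρ]
              _ = (ρ ≫ i) ≫ (ρ ≫ i) := by simp only [Category.assoc]
              _ = 𝟙 I := by rw [hρi, Category.comp_id]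
          calc ρ ≫ w ≫ s ≫ vq = (ρ ≫ w ≫ s ≫ vq) ≫ 𝟙 I := by rw [Category.comp_id]
            _ = (ρ ≫ w ≫ s ≫ vq) ≫ (ρ ≫ w ≫ t ≫ i) := by rw [h3]
            _ = ρ ≫ (w ≫ (s ≫ vq ≫ ρ ≫ w)) ≫ t ≫ i := by simp only [Category.assoc]
            _ = 𝟙 I := by rw [h2]; exact h3
        calc q = (ρ ≫ w ≫ s ≫ vq) ≫ q := by rw [hj, Category.id_comp]
          _ = (ρ ≫ w ≫ s) ≫ (vq ≫ q) := by simp only [Category.assoc]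
          _ = 0 := by rw [hvq0, comp_zero]
      · -- surjectivity
        intro x
        obtain ⟨g, hg⟩ := hsurj X x
        refine ⟨ρ ≫ w ≫ g, ?_⟩
        show F.map (ρ ≫ w ≫ g) θ = x
        rw [F.map_comp, F.map_comp, comp_apply, comp_apply, hρθ, hξ, hg]
    have : ∀ X : K, IsIso (μ.app X) := fun X => by
      rw [ConcreteCategory.isIso_iff_bijective]
      exact hbij X
    have : IsIso μ := NatIso.isIso_of_isIso_app μ
    exact ⟨I, ⟨(asIso μ).symm⟩⟩
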